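/- For every n-partite full-correlation box with associated Boolean function f whose degree-≥2 monomial supports 𝒥 have a connected intersection graph, the box can be simulated exactly using |𝒥| generalized PR boxes (each on the variables of one monomial, possibly with constant-1 inputs for absent parties), local even-parity boxes, and XOR-ing of outputs: party i outputs the XOR of its outputs from all boxes in which it participates, and the joint distribution equals the full-correlation box of f. -/

import Mathlib

lemma zmod2_cases (z : ZMod 2) : z = 0 ∨ z = 1 := by revert z; decide

lemma aux_sum_update (n : ℕ) (i0 : Fin n) (v : Fin n → ZMod 2) :
    ∑ i, Function.update v i0 (v i0 + 1) i = (∑ i, v i) + 1 := by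
  rw [Finset.sum_update_of_mem (Finset.mem_univ i0),
    ← Finset.sum_erase_add _ _ (Finset.mem_univ i0), Finset.sdiff_singleton_eq_erase]
  ring

lemma aux_upd_invol (n : ℕ) (i0 : Fin n) (v : Fin n → ZMod 2) :
    Function.update (Function.update v i0 (v i0 + 1)) i0
      (Function.update v i0 (v i0 + 1) i0 + 1) = v := by
  ext i
  by_cases h : i = i0
  · subst h
    simp only [Function.update_self]
    rw [add_assoc, show (1:ZMod 2) + 1 = 0 from rfl, add_zero]
  · simp [Function.update_of_ne h]

lemma aux_card_parity (n : ℕ) (hn : 1 ≤ n) (t : ZMod 2) :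
    (Finset.univ.filter (fun v : Fin n → ZMod 2 => ∑ i, v i = t)).card = 2 ^ (n - 1) := by
  have i0 : Fin n := ⟨0, hn⟩
  have key : ∀ s : ZMod 2,
      (Finset.univ.filter (fun v : Fin n → ZMod 2 => ∑ i, v i = s)).card =
      (Finset.univ.filter (fun v : Fin n → ZMod 2 => ∑ i, v i = s + 1)).card := by
    intro s
    apply Finset.card_bij' (fun v _ => Function.update v i0 (v i0 + 1))
      (fun v _ => Function.update v i0 (v i0 + 1)) <;>
      intro v hv <;> simp only [Finset.mem_filter, Finset.mem_univ, true_and] at hv ⊢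
    · exact aux_upd_invol n i0 v
    · exact aux_upd_invol n i0 v
    · rw [aux_sum_update, hv]
    · rw [aux_sum_update, hv, add_assoc, show (1:ZMod 2) + 1 = 0 from rfl, add_zero]
  have total : (Finset.univ.filter (fun v : Fin n → ZMod 2 => ∑ i, v i = 0)).card +
      (Finset.univ.filter (fun v : Fin n → ZMod 2 => ∑ i, v i = 1)).card = 2 ^ n := by
    have h0 := Finset.card_filter_add_card_filter_not
      (s := (Finset.univ : Finset (Fin n → ZMod 2)))
      (p := fun v => ∑ i, v i = 0)
    rw [Finset.card_univ] at h0
    have h2 : (Finset.univ.filter (fun v : Fin n → ZMod 2 => ¬ (fun v : Fin n → ZMod 2 => ∑ i, v i = 0) v)) =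
        (Finset.univ.filter (fun v : Fin n → ZMod 2 => ∑ i, v i = 1)) := by
      ext v
      simp only [Finset.mem_filter, Finset.mem_univ, true_and]
      constructor
      · intro h
        rcases zmod2_cases (∑ i, v i) with h1 | h1
        · exact absurd h1 h
        · exact h1
      · intro h; rw [h]; exact one_ne_zero
    rw [h2] at h0
    rw [h0]
    rw [Fintype.card_fun]
    simp
  have e01 : (Finset.univ.filter (fun v : Fin n → ZMod 2 => ∑ i, v i = 0)).card =
      (Finset.univ.filter (fun v : Fin n → ZMod 2 => ∑ i, v i = 1)).card := by
    have h := key 0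
    rw [zero_add] at h
    exact h
  have hpow : 2 ^ n = 2 * 2 ^ (n - 1) := by
    conv_lhs => rw [← Nat.sub_add_cancel hn]
    rw [pow_succ]
    ring
  have hc0 : (Finset.univ.filter (fun v : Fin n → ZMod 2 => ∑ i, v i = 0)).card = 2 ^ (n-1) := by
    set c0 := (Finset.univ.filter (fun v : Fin n → ZMod 2 => ∑ i, v i = 0)).card with hcc0
    set c1 := (Finset.univ.filter (fun v : Fin n → ZMod 2 => ∑ i, v i = 1)).card with hcc1
    clear_value c0 c1
    clear key hcc0 hcc1
    omega
  rcases zmod2_cases t with rfl | rfl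
  · exact hc0
  · rw [← e01]; exact hc0

lemma aux_sum_parity (n : ℕ) (hn : 1 ≤ n) (t : ZMod 2) :
    ∑ v : Fin n → ZMod 2, (if (∑ i, v i) = t then ((2:ℝ) ^ (-((n:ℤ) - 1))) else 0) = 1 := by
  rw [← Finset.sum_filter, Finset.sum_const, aux_card_parity n hn t, nsmul_eq_mul]
  have h1 : -((n:ℤ) - 1) = -((n-1:ℕ):ℤ) := by
    have : ((n-1:ℕ):ℤ) = (n:ℤ) - 1 := by omega
    rw [this]
  rw [h1, zpow_neg, zpow_natCast]
  push_cast
  rw [mul_inv_cancel₀]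
  positivity

lemma zmod2_add_eq_zero (u v : ZMod 2) : u + v = 0 ↔ u = v := by revert u v; decide

lemma zmod2_add_add (u v : ZMod 2) : u + v + v = u := by revert u v; decide



theorem full_correlation_box_simulated_by_PR_boxes (n : ℕ) (hn : 1 ≤ n)
    (f : (Fin n → ZMod 2) → ZMod 2)
    (a : Finset (Fin n) → ZMod 2)
    (hf : ∀ x : Fin n → ZMod 2, f x = ∑ I : Finset (Fin n), a I * ∏ i ∈ I, x i)
    -- 𝒥: the degree-≥2 monomial supports; its intersection graph is connected
    (hconn : ∀ A : Finset (Finset (Fin n)),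
      A ⊆ Finset.univ.filter (fun I : Finset (Fin n) => a I = 1 ∧ 2 ≤ I.card) →
      A.Nonempty →
      ((Finset.univ.filter (fun I : Finset (Fin n) => a I = 1 ∧ 2 ≤ I.card)) \ A).Nonempty →
      ¬ Disjoint (A.biUnion id)
        (((Finset.univ.filter (fun I : Finset (Fin n) => a I = 1 ∧ 2 ≤ I.card)) \ A).biUnion id)) :
    -- the XOR of one shared even-parity box and, for each monomial I with a_I = 1,
    -- an independent n-PR box where party i inputs x_i if i ∈ I and 1 otherwise,
    -- reproduces the full-correlation box of f
    ∀ c x : Fin n → ZMod 2,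
      (∑ e : Fin n → ZMod 2, ∑ b : Finset (Fin n) → (Fin n → ZMod 2),
        (if (∑ i, e i) = 0 then ((2:ℝ) ^ (-((n:ℤ) - 1))) else 0)
        * (if ∀ I ∉ Finset.univ.filter (fun I : Finset (Fin n) => a I = 1), b I = 0
            then ∏ I ∈ Finset.univ.filter (fun I : Finset (Fin n) => a I = 1),
              (if (∑ i, b I i) = (∏ i ∈ I, x i) then ((2:ℝ) ^ (-((n:ℤ) - 1))) else 0)
            else 0)
        * (if c = (fun i => e i + ∑ I ∈ Finset.univ.filter
              (fun I : Finset (Fin n) => a I = 1), b I i) then 1 else 0))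
      = (if (∑ i, c i) = f x then ((2:ℝ) ^ (-((n:ℤ) - 1))) else 0) := by
  
  intro c x
  set r : ℝ := (2:ℝ) ^ (-((n:ℤ) - 1)) with hr
  set S : Finset (Finset (Fin n)) :=
    Finset.univ.filter (fun I : Finset (Fin n) => a I = 1) with hSdef
  set B : (Finset (Fin n) → (Fin n → ZMod 2)) → ℝ := fun b =>
    (if ∀ I ∉ S, b I = 0
      then ∏ I ∈ S, (if (∑ i, b I i) = (∏ i ∈ I, x i) then r else 0)
      else 0) with hBdef
  -- swap sums
  rw [Finset.sum_comm]
  -- collapse the e-sum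
  have step1 : ∀ b : Finset (Fin n) → (Fin n → ZMod 2),
      (∑ e : Fin n → ZMod 2,
        (if (∑ i, e i) = 0 then r else 0) * B b
          * (if c = (fun i => e i + ∑ I ∈ S, b I i) then 1 else 0))
      = (if (∑ i, (c i + ∑ I ∈ S, b I i)) = 0 then r else 0) * B b := by
    intro b
    rw [Finset.sum_eq_single (fun i => c i + ∑ I ∈ S, b I i)]
    · have hc : c = (fun i => (c i + ∑ I ∈ S, b I i) + ∑ I ∈ S, b I i) := by
        funext i
        rw [zmod2_add_add]
      rw [if_pos hc, mul_one]
    · intro e _ hne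
      have : ¬ (c = fun i => e i + ∑ I ∈ S, b I i) := by
        intro h
        apply hne
        funext i
        have := congrFun h i
        rw [this, zmod2_add_add]
      rw [if_neg this, mul_zero]
    · intro h
      exact absurd (Finset.mem_univ _) h
  rw [Finset.sum_congr rfl fun b _ => step1 b]
  -- pointwise rewrite of the parity condition
  have step2 : ∀ b : Finset (Fin n) → (Fin n → ZMod 2),
      (if (∑ i, (c i + ∑ I ∈ S, b I i)) = 0 then r else 0) * B b
      = (if (∑ i, c i) = f x then r else 0) * B b := by
    intro b
    by_cases hB : B b = 0
    · rw [hB, mul_zero, mul_zero]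
    · have hb0 : ∀ I ∉ S, b I = 0 := by
        by_contra h
        exact hB (if_neg h)
      have hprod : ∀ I ∈ S, (∑ i, b I i) = (∏ i ∈ I, x i) := by
        intro I hI
        by_contra h
        apply hB
        rw [hBdef]
        simp only [if_pos hb0]
        exact Finset.prod_eq_zero hI (if_neg h)
      have hsum : (∑ i, (c i + ∑ I ∈ S, b I i)) = (∑ i, c i) + f x := by
        rw [Finset.sum_add_distrib, Finset.sum_comm]
        congr 1
        rw [hf x, hSdef]
        rw [← Finset.sum_filter_add_sum_filter_not Finset.univ
          (fun I : Finset (Fin n) => a I = 1)]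
        have h1 : ∑ I ∈ Finset.univ.filter (fun I : Finset (Fin n) => a I = 1),
            a I * ∏ i ∈ I, x i
            = ∑ I ∈ Finset.univ.filter (fun I : Finset (Fin n) => a I = 1),
              ∏ i ∈ I, x i := by
          apply Finset.sum_congr rfl
          intro I hI
          rw [Finset.mem_filter] at hI
          rw [hI.2, one_mul]
        have h2 : ∑ I ∈ Finset.univ.filter (fun I : Finset (Fin n) => ¬ a I = 1),
            a I * ∏ i ∈ I, x i = 0 := by
          apply Finset.sum_eq_zero
          intro I hI
          rw [Finset.mem_filter] at hI
          rcases zmod2_cases (a I) with h | h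
          · rw [h, zero_mul]
          · exact absurd h hI.2
        rw [h1, h2, add_zero]
        exact Finset.sum_congr rfl (fun I hI => hprod I hI)
      rw [hsum]
      simp only [zmod2_add_eq_zero]
  simp only [step2]
  rw [← Finset.mul_sum]
  -- the b-sum is 1
  have step3 : (∑ b : Finset (Fin n) → (Fin n → ZMod 2), B b) = 1 := by
    have hBeq : ∀ b : Finset (Fin n) → (Fin n → ZMod 2),
        B b = ∏ I : Finset (Fin n),
          (if a I = 1 then (if (∑ i, b I i) = (∏ i ∈ I, x i) then r else 0)
            else (if b I = 0 then 1 else 0)) := by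
      intro b
      by_cases hb : ∀ I ∉ S, b I = 0
      · rw [hBdef]
        simp only [if_pos hb]
        rw [← Finset.prod_filter_mul_prod_filter_not Finset.univ
          (fun I : Finset (Fin n) => a I = 1)]
        have h1 : ∏ I ∈ Finset.univ.filter (fun I : Finset (Fin n) => a I = 1),
            (if a I = 1 then (if (∑ i, b I i) = (∏ i ∈ I, x i) then r else 0)
              else (if b I = 0 then 1 else 0))
            = ∏ I ∈ S, (if (∑ i, b I i) = (∏ i ∈ I, x i) then r else 0) := by
          apply Finset.prod_congr rfl
          intro I hI
          rw [Finset.mem_filter] at hI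
          rw [if_pos hI.2]
        have h2 : ∏ I ∈ Finset.univ.filter (fun I : Finset (Fin n) => ¬ a I = 1),
            (if a I = 1 then (if (∑ i, b I i) = (∏ i ∈ I, x i) then r else 0)
              else (if b I = 0 then 1 else 0)) = 1 := by
          apply Finset.prod_eq_one
          intro I hI
          rw [Finset.mem_filter] at hI
          have hIS : I ∉ S := by
            rw [hSdef, Finset.mem_filter]
            intro h
            exact hI.2 h.2
          rw [if_neg hI.2, if_pos (hb I hIS)]
        rw [h1, h2, mul_one]
      · rw [hBdef]
        simp only [if_neg hb]
        push_neg at hb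
        obtain ⟨I0, hI0S, hI0⟩ := hb
        have hI0a : ¬ a I0 = 1 := by
          intro h
          exact hI0S (by rw [hSdef, Finset.mem_filter]; exact ⟨Finset.mem_univ _, h⟩)
        symm
        apply Finset.prod_eq_zero (Finset.mem_univ I0)
        rw [if_neg hI0a, if_neg hI0]
    simp only [hBeq]
    rw [← Fintype.prod_sum (f := fun (I : Finset (Fin n)) (v : Fin n → ZMod 2) =>
      if a I = 1 then (if (∑ i, v i) = (∏ i ∈ I, x i) then r else 0)
        else (if v = 0 then 1 else 0))]
    apply Finset.prod_eq_one
    intro I _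
    by_cases hI : a I = 1
    · simp only [if_pos hI]
      exact aux_sum_parity n hn _
    · simp only [if_neg hI]
      simp
  rw [step3, mul_one]
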